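/- Fix p ∈ (0,1) with 3/(1−p) = n+1 for some natural n ≥ 3, and let ρ > 0 and u_* = (d/(1−p))^{(1−p)/(3p)}. Then Q(u_*) > 0 holds for the polynomial Q(u) = −(1−p)²·u^{n+1} + d·u³ − ρ·p² if and only if d > d_* := ρ^p · p^p · (1−p)^{1−p}. -/

import Mathlib

theorem stmt_5 (p ρ d : ℝ) (n : ℕ) (hn : 3 ≤ n)
    (hp : 0 < p) (hp1 : p < 1) (hpn : 3 / (1 - p) = (n : ℝ) + 1)
    (hρ : 0 < ρ) (hd : 0 < d) :
    (0 < -(1 - p) ^ 2 * ((d / (1 - p)) ^ ((1 - p) / (3 * p))) ^ (n + 1)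
        + d * ((d / (1 - p)) ^ ((1 - p) / (3 * p))) ^ 3 - ρ * p ^ 2)
    ↔ ρ ^ p * p ^ p * (1 - p) ^ (1 - p) < d := by
  have hq : 0 < 1 - p := by linarith
  set a : ℝ := d / (1 - p) with ha_def
  have ha : 0 < a := div_pos hd hq
  have hda : d = (1 - p) * a := by rw [ha_def]; field_simp [hq.ne']
  have hexp1 : (1 - p) / (3 * p) * ((n : ℝ) + 1) = 1 / p := by
    rw [← hpn]; field_simp
  have h1 : (a ^ ((1 - p) / (3 * p))) ^ (n + 1) = a ^ (1 / p) := by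
    rw [← Real.rpow_natCast (a ^ ((1 - p) / (3 * p))) (n + 1),
      ← Real.rpow_mul ha.le, Nat.cast_add, Nat.cast_one, hexp1]
  have h3 : (a ^ ((1 - p) / (3 * p))) ^ 3 = a ^ ((1 - p) / p) := by
    rw [← Real.rpow_natCast (a ^ ((1 - p) / (3 * p))) 3,
      ← Real.rpow_mul ha.le]
    congr 1
    push_cast
    field_simp
  have h4 : a * a ^ ((1 - p) / p) = a ^ (1 / p) := by
    nth_rewrite 1 [← Real.rpow_one a]
    rw [← Real.rpow_add ha]
    congr 1
    field_simp
    ring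
  have key : -(1 - p) ^ 2 * (a ^ ((1 - p) / (3 * p))) ^ (n + 1)
      + d * (a ^ ((1 - p) / (3 * p))) ^ 3 - ρ * p ^ 2
      = p * (1 - p) * a ^ (1 / p) - ρ * p ^ 2 := by
    rw [h1, h3, hda, mul_assoc, h4]; ring
  rw [key]
  have hap : (a ^ (1 / p)) ^ p = a := by
    rw [← Real.rpow_mul ha.le, one_div, inv_mul_cancel₀ hp.ne', Real.rpow_one]
  have hc : (ρ * p / (1 - p)) ^ p * (1 - p) = ρ ^ p * p ^ p * (1 - p) ^ (1 - p) := by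
    rw [Real.div_rpow (by positivity) hq.le, Real.mul_rpow hρ.le hp.le]
    rw [div_mul_eq_mul_div, div_eq_iff (by positivity : ((1:ℝ) - p) ^ p ≠ 0),
      mul_assoc (ρ ^ p * p ^ p), ← Real.rpow_add hq,
      show (1 - p) + p = (1:ℝ) by ring, Real.rpow_one]
  constructor
  · intro h
    have h' : ρ * p / (1 - p) < a ^ (1 / p) := by
      rw [div_lt_iff₀ hq]; nlinarith [Real.rpow_pos_of_pos ha (1/p)]
    have := (Real.rpow_lt_rpow_iff (by positivity) (by positivity) hp).mpr h'
    rw [hap] at this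
    calc ρ ^ p * p ^ p * (1 - p) ^ (1 - p) = (ρ * p / (1 - p)) ^ p * (1 - p) := hc.symm
      _ < a * (1 - p) := by nlinarith
      _ = d := by rw [hda]; ring
  · intro h
    have h2 : (ρ * p / (1 - p)) ^ p < a := by
      have : (ρ * p / (1 - p)) ^ p * (1 - p) < a * (1 - p) := by
        rw [hc, hda] at *; linarith [h]
      exact lt_of_mul_lt_mul_right this hq.le
    have h5 : (ρ * p / (1 - p)) ^ p < (a ^ (1 / p)) ^ p := by rw [hap]; exact h2
    have h' : ρ * p / (1 - p) < a ^ (1 / p) :=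
      (Real.rpow_lt_rpow_iff (by positivity) (by positivity) hp).mp h5
    rw [div_lt_iff₀ hq] at h'
    nlinarith [Real.rpow_pos_of_pos ha (1/p)]
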